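/- Assume α₁ − α₂α₃ + α₃² ≠ 0. Then the pair (A, B) of the mixed-traffic system is stabilizable: for every complex number λ with Re(λ) ≥ 0, the complex matrix [A − λI, B] ∈ ℂ^{2n×(2n+m)} (with A and B regarded as complex matrices) has rank 2n. -/

import Mathlib

open Matrix

/-- The controllability matrix `[B, AB, …, A^{N−1}B]` of a pair `(A, B)`. -/
noncomputable def ctrbMat {N p : ℕ} (A : Matrix (Fin N) (Fin N) ℝ)
    (B : Matrix (Fin N) (Fin p) ℝ) : Matrix (Fin N) (Fin N × Fin p) ℝ :=
  Matrix.of fun r kj => (A ^ (kj.1 : ℕ) * B) r kj.2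

/-- The observability matrix `col(C, CA, …, CA^{N−1})` of a pair `(A, C)`. -/
noncomputable def obsvMat {N p : ℕ} (A : Matrix (Fin N) (Fin N) ℝ)
    (C : Matrix (Fin p) (Fin N) ℝ) : Matrix (Fin N × Fin p) (Fin N) ℝ :=
  Matrix.of fun kj c => (C * A ^ (kj.1 : ℕ)) kj.2 c

noncomputable def matP1 (α1 α2 : ℝ) : Matrix (Fin 2) (Fin 2) ℝ := !![0, -1; α1, -α2]
noncomputable def matP2 (α3 : ℝ) : Matrix (Fin 2) (Fin 2) ℝ := !![0, 1; 0, α3]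
noncomputable def matS1 : Matrix (Fin 2) (Fin 2) ℝ := !![(0:ℝ), -1; 0, 0]
noncomputable def matS2 : Matrix (Fin 2) (Fin 2) ℝ := !![(0:ℝ), 1; 0, 0]

def fin2 (k : ℕ) : Fin 2 := ⟨k % 2, Nat.mod_lt _ (by norm_num)⟩

/-- The mixed-traffic system matrix `A ∈ ℝ^{2n×2n}` (vehicles 0-indexed `0,…,n−1`;
the CAV locations are given by the strictly increasing map `ι : Fin m → Fin n`).
Block `(i,i)` is `S₁` if vehicle `i` is a CAV, `P₁` otherwise; block `(i,i−1)` is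
`S₂` if vehicle `i` is a CAV, `P₂` otherwise; all other blocks vanish. -/
noncomputable def trafficA (n m : ℕ) (ι : Fin m → Fin n) (α1 α2 α3 : ℝ) :
    Matrix (Fin (2 * n)) (Fin (2 * n)) ℝ :=
  Matrix.of fun r c =>
    if (r : ℕ) / 2 = (c : ℕ) / 2 then
      (if ∃ k, (ι k : ℕ) = (r : ℕ) / 2 then matS1 (fin2 r) (fin2 c)
       else matP1 α1 α2 (fin2 r) (fin2 c))
    else if (r : ℕ) / 2 = (c : ℕ) / 2 + 1 then
      (if ∃ k, (ι k : ℕ) = (r : ℕ) / 2 then matS2 (fin2 r) (fin2 c)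
       else matP2 α3 (fin2 r) (fin2 c))
    else 0

/-- The input matrix `B ∈ ℝ^{2n×m}`: the `k`-th column is the standard basis
vector whose nonzero entry sits at the (0-indexed) position `2·ι(k)+1`,
i.e. the velocity component of the `k`-th CAV. -/
noncomputable def trafficB (n m : ℕ) (ι : Fin m → Fin n) :
    Matrix (Fin (2 * n)) (Fin m) ℝ :=
  Matrix.of fun r k => if (r : ℕ) = 2 * (ι k : ℕ) + 1 then 1 else 0

/-- The output matrix `C ∈ ℝ^{(n+m)×2n}`: the first `n` rows pick out the velocity
errors of all vehicles, the last `m` rows pick out the spacing errors of the CAVs. -/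
noncomputable def trafficC (n m : ℕ) (ι : Fin m → Fin n) :
    Matrix (Fin (n + m)) (Fin (2 * n)) ℝ :=
  Matrix.of fun j c =>
    if h : (j : ℕ) < n then (if (c : ℕ) = 2 * (j : ℕ) + 1 then 1 else 0)
    else (if (c : ℕ) = 2 * (ι ⟨(j : ℕ) - n, by have := j.isLt; omega⟩ : ℕ) then 1 else 0)

lemma quad_ne_zero' (α1 α2 : ℝ) (h1 : 0 < α1) (h2 : 0 < α2)
    (lam : ℂ) (hre : 0 ≤ lam.re) :
    lam ^ 2 + (α2 : ℂ) * lam + (α1 : ℂ) ≠ 0 := by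
  intro h
  have him := congrArg Complex.im h
  have hre' := congrArg Complex.re h
  simp [pow_two, Complex.add_im, Complex.add_re, Complex.mul_im, Complex.mul_re] at him hre'
  have hb : lam.im = 0 := by
    rcases mul_eq_zero.1 (show lam.im * (2 * lam.re + α2) = 0 by ring_nf; linarith [him]) with h' | h'
    · exact h'
    · nlinarith
  nlinarith [hre', hb]

/-- **Theorem 1(2), stabilizability (PBH test).** If `α₁ − α₂α₃ + α₃² ≠ 0`, the
mixed-traffic pair `(A, B)` is stabilizable: for every complex `λ` with
`Re(λ) ≥ 0`, the matrix `[A − λI, B] ∈ ℂ^{2n×(2n+m)}` has rank `2n`. -/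
theorem mixed_traffic_stabilizable
    (n m : ℕ) (hn : 1 ≤ n) (hm : 1 ≤ m) (hmn : m ≤ n)
    (ι : Fin m → Fin n) (hmono : StrictMono ι)
    (α1 α2 α3 : ℝ) (hα1 : 0 < α1) (hα3 : 0 < α3) (hα23 : α3 < α2)
    (hcond : α1 - α2 * α3 + α3 ^ 2 ≠ 0) :
    ∀ lam : ℂ, 0 ≤ lam.re →
      (Matrix.fromCols
          ((trafficA n m ι α1 α2 α3).map Complex.ofReal -
            lam • (1 : Matrix (Fin (2 * n)) (Fin (2 * n)) ℂ))
          ((trafficB n m ι).map Complex.ofReal)).rank = 2 * n := by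
  intro lam hre
  classical
  have hα2 : 0 < α2 := lt_trans hα3 hα23
  set A' : Matrix (Fin (2*n)) (Fin (2*n)) ℂ :=
    (trafficA n m ι α1 α2 α3).map Complex.ofReal with hA'
  set B' : Matrix (Fin (2*n)) (Fin m) ℂ := (trafficB n m ι).map Complex.ofReal with hB'
  -- the key injectivity statement (left null space is trivial)
  have key : ∀ v : Fin (2*n) → ℂ, v ᵥ* (A' - lam • 1) = 0 → v ᵥ* B' = 0 → v = 0 := by
    intro v hvA hvB
    -- B condition
    have hB0 : ∀ k : Fin m, v ⟨2 * (ι k : ℕ) + 1, by have := (ι k).isLt; omega⟩ = 0 := by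
      intro k
      have h := congrFun hvB k
      have hsum : (v ᵥ* B') k = ∑ r, v r * B' r k := rfl
      rw [hsum] at h
      rw [Finset.sum_eq_single_of_mem (⟨2 * (ι k : ℕ) + 1, by have := (ι k).isLt; omega⟩ : Fin (2*n))
        (Finset.mem_univ _)] at h
      · simpa [hB', trafficB] using h
      · intro r _ hr
        have : (r : ℕ) ≠ 2 * (ι k : ℕ) + 1 := by
          intro hc; exact hr (Fin.ext hc)
        simp [hB', trafficB, this]
    -- eigen equations
    have eqA : ∀ c : Fin (2*n), ∑ r, v r * A' r c = lam * v c := by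
      intro c
      have h := congrFun hvA c
      have hsum : (v ᵥ* (A' - lam • 1)) c = ∑ r, v r * (A' r c - lam * (if r = c then 1 else 0)) := by
        simp [Matrix.vecMul, dotProduct, Matrix.sub_apply, Matrix.smul_apply,
          Matrix.one_apply]
      rw [hsum] at h
      simp only [mul_sub, Finset.sum_sub_distrib, mul_ite, mul_one, mul_zero] at h
      rw [Finset.sum_ite_eq' Finset.univ c (fun r => v r * lam)] at h
      simp only [Finset.mem_univ, if_true, Pi.zero_apply] at h
      have := sub_eq_zero.mp h
      rw [this]; ring
    -- block step
    have block : ∀ i : ℕ, i < n → (∀ r : Fin (2*n), 2*i+2 ≤ (r:ℕ) → v r = 0) →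
        ∀ r : Fin (2*n), 2*i ≤ (r:ℕ) → v r = 0 := by
      intro i hi hz
      set r0 : Fin (2*n) := ⟨2*i, by omega⟩ with hr0
      set r1 : Fin (2*n) := ⟨2*i+1, by omega⟩ with hr1
      have hne : r0 ≠ r1 := by simp [hr0, hr1, Fin.ext_iff]
      -- reduction of the sums
      have hred : ∀ c : Fin (2*n), (c:ℕ)/2 = i →
          ∑ r, v r * A' r c = v r0 * A' r0 c + v r1 * A' r1 c := by
        intro c hc
        refine Finset.sum_eq_add_of_mem r0 r1 (Finset.mem_univ _) (Finset.mem_univ _) hne ?_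
        intro r _ hr
        rcases le_or_gt (2*i+2) (r:ℕ) with h | h
        · rw [hz r h, zero_mul]
        · have hrlt : (r:ℕ) < 2*i := by
            rcases Nat.lt_or_ge (r:ℕ) (2*i) with h' | h'
            · exact h'
            · exfalso
              have : (r:ℕ) = 2*i ∨ (r:ℕ) = 2*i+1 := by omega
              rcases this with h'' | h''
              · exact hr.1 (Fin.ext h'')
              · exact hr.2 (Fin.ext h'')
          have hAzero : A' r c = 0 := by
            have hd1 : (r:ℕ)/2 ≠ (c:ℕ)/2 := by omega
            have hd2 : (r:ℕ)/2 ≠ (c:ℕ)/2 + 1 := by omega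
            simp [hA', trafficA, hd1, hd2]
          rw [hAzero, mul_zero]
      have hc0 : ((r0:Fin (2*n)):ℕ)/2 = i := by show (2*i)/2 = i; omega
      have hc1 : ((r1:Fin (2*n)):ℕ)/2 = i := by show (2*i+1)/2 = i; omega
      have f0 : fin2 (2*i) = 0 := by ext; simp only [fin2]; omega
      have f1 : fin2 (2*i+1) = 1 := by ext; simp only [fin2]; omega
      have e0 := eqA r0
      have e1 := eqA r1
      rw [hred r0 hc0] at e0
      rw [hred r1 hc1] at e1
      have hdv : (2*i+1)/2 = i := by omega
      have hv0 : v r0 = 0 ∧ v r1 = 0 := by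
        by_cases hcav : ∃ k, (ι k : ℕ) = i
        · -- CAV block
          have hA00 : A' r0 r0 = 0 := by
            simp [hA', trafficA, hr0, hc0, hcav, f0, matS1]
          have hA10 : A' r1 r0 = 0 := by
            simp [hA', trafficA, hr0, hr1, hc0, hc1, hcav, f0, f1, matS1, hdv]
          have hA01 : A' r0 r1 = -1 := by
            simp [hA', trafficA, hr0, hr1, hc0, hc1, hcav, f0, f1, matS1, hdv]
          have hA11 : A' r1 r1 = 0 := by
            simp [hA', trafficA, hr1, hc1, hcav, f1, matS1, hdv]
          obtain ⟨k, hk⟩ := hcav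
          have hv1 : v r1 = 0 := by
            have := hB0 k
            have heq : (⟨2 * (ι k : ℕ) + 1, by have := (ι k).isLt; omega⟩ : Fin (2*n)) = r1 := by
              apply Fin.ext; simp [hr1]; omega
            rwa [heq] at this
          rw [hA01, hA11, hv1] at e1
          -- e1 : v r0 * (-1) + 0 * 0 = lam * 0
          have : v r0 = 0 := by
            have := e1
            simp at this
            linear_combination this
          exact ⟨this, hv1⟩
        · -- HDV block
          have hA00 : A' r0 r0 = 0 := by
            simp [hA', trafficA, hr0, hc0, hcav, f0, matP1]
          have hA10 : A' r1 r0 = (α1:ℂ) := by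
            simp [hA', trafficA, hr0, hr1, hc0, hc1, hcav, f0, f1, matP1, hdv]
          have hA01 : A' r0 r1 = -1 := by
            simp [hA', trafficA, hr0, hr1, hc0, hc1, hcav, f0, f1, matP1, hdv]
          have hA11 : A' r1 r1 = -(α2:ℂ) := by
            simp [hA', trafficA, hr1, hc1, hcav, f1, matP1, hdv]
          rw [hA00, hA10] at e0
          rw [hA01, hA11] at e1
          -- e0 : v r0 * 0 + v r1 * α1 = lam * v r0
          -- e1 : v r0 * (-1) + v r1 * (-α2) = lam * v r1
          have hq : (lam ^ 2 + (α2:ℂ) * lam + (α1:ℂ)) * v r1 = 0 := by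
            linear_combination e0 - lam * e1
          have hv1 : v r1 = 0 := by
            rcases mul_eq_zero.1 hq with h' | h'
            · exact absurd h' (quad_ne_zero' α1 α2 hα1 hα2 lam hre)
            · exact h'
          have hv0 : v r0 = 0 := by
            rw [hv1] at e1
            linear_combination -e1
          exact ⟨hv0, hv1⟩
      intro r hr
      rcases le_or_gt (2*i+2) (r:ℕ) with h | h
      · exact hz r h
      · have : (r:ℕ) = 2*i ∨ (r:ℕ) = 2*i+1 := by omega
        rcases this with h'' | h''
        · rw [show r = r0 from Fin.ext h'']; exact hv0.1
        · rw [show r = r1 from Fin.ext h'']; exact hv0.2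
    -- downward induction
    have all : ∀ k : ℕ, ∀ r : Fin (2*n), 2*n ≤ (r:ℕ) + 2*k → v r = 0 := by
      intro k
      induction k with
      | zero => intro r hr; exact absurd r.isLt (by omega)
      | succ k ih =>
        intro r hr
        rcases le_or_gt (2*n) ((r:ℕ) + 2*k) with h | h
        · exact ih r h
        · have hkn : k < n := by have := r.isLt; omega
          exact block (n - k - 1) (by omega)
            (fun r' hr' => ih r' (by omega)) r (by omega)
    funext r
    exact all n r (by have := r.isLt; omega)
  -- from injectivity to rank
  rw [← Matrix.rank_transpose]
  have hinj : Function.Injective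
      ((Matrix.fromCols (A' - lam • 1) B')ᵀ).mulVecLin := by
    rw [← LinearMap.ker_eq_bot, LinearMap.ker_eq_bot']
    intro v hv
    have hv' : v ᵥ* Matrix.fromCols (A' - lam • 1) B' = 0 := by
      rw [← Matrix.mulVec_transpose]
      exact hv
    rw [Matrix.vecMul_fromCols] at hv'
    have h1 : v ᵥ* (A' - lam • 1) = 0 := by
      funext c; exact congrFun hv' (Sum.inl c)
    have h2 : v ᵥ* B' = 0 := by
      funext k; exact congrFun hv' (Sum.inr k)
    exact key v h1 h2
  rw [Matrix.rank]
  rw [LinearMap.finrank_range_of_inj hinj]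
  simp [Module.finrank_fin_fun]
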